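/- Let Ω ⊆ ℝⁿ be a bounded open set, 1 < p < ∞, and let σ : Ω → ℝ be measurable with esssup σ < ∞ and σ ≥ 1 almost everywhere. Let D = esssupp(σ − 1), assume m(D) > 0, let ρ ∈ ℝⁿ be a unit vector, and let t < h_D(ρ). Then ∫_Ω (1 − σ(x)^{−1/(p−1)}) e^{pτ(x·ρ − t)} dx → +∞ as τ → ∞. -/

import Mathlib

open MeasureTheory Filter Set
open scoped RealInnerProductSpace Topology

noncomputable section

/-- The closed half-space `H_{ρ,t} = {x ∈ ℝⁿ : x·ρ ≤ t}`. -/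
def halfSpace {n : ℕ} (ρ : EuclideanSpace ℝ (Fin n)) (t : ℝ) :
    Set (EuclideanSpace ℝ (Fin n)) :=
  {x | ⟪x, ρ⟫ ≤ t}

/-- The essential support of a measurable function `f` on `Ω`: the set `Ω` minus the
union of all open sets `O ⊆ Ω` on which `f = 0` almost everywhere. -/
def essSupport {n : ℕ} (Ω : Set (EuclideanSpace ℝ (Fin n)))
    (f : EuclideanSpace ℝ (Fin n) → ℝ) : Set (EuclideanSpace ℝ (Fin n)) :=
  Ω \ ⋃ O ∈ {O : Set (EuclideanSpace ℝ (Fin n)) |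
      IsOpen O ∧ O ⊆ Ω ∧ volume {x ∈ O | f x ≠ 0} = 0}, O

/-- The essential convex support function `h_A(ρ) = inf {t ∈ ℝ : m(A \ H_{ρ,t}) = 0}`. -/
def essSuppFn {n : ℕ} (A : Set (EuclideanSpace ℝ (Fin n)))
    (ρ : EuclideanSpace ℝ (Fin n)) : ℝ :=
  sInf {t : ℝ | volume (A \ halfSpace ρ t) = 0}

/-- If `σ ≥ 1` a.e., `esssup σ < ∞`, `D = esssupp(σ − 1)` has positive measure and
`t < h_D(ρ)`, then `∫_Ω (1 − σ^{−1/(p−1)}) e^{pτ(x·ρ − t)} dx → +∞` as `τ → ∞`. -/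
theorem indicator_integral_blowup_above {n : ℕ} (Ω : Set (EuclideanSpace ℝ (Fin n)))
    (hΩo : IsOpen Ω) (hΩb : Bornology.IsBounded Ω)
    (p : ℝ) (hp : 1 < p)
    (σ : EuclideanSpace ℝ (Fin n) → ℝ) (hσm : Measurable σ)
    (hub : ∃ C : ℝ, ∀ᵐ x ∂(volume.restrict Ω), σ x ≤ C)
    (hge : ∀ᵐ x ∂(volume.restrict Ω), 1 ≤ σ x)
    (hD : 0 < volume (essSupport Ω (fun x => σ x - 1)))
    (ρ : EuclideanSpace ℝ (Fin n)) (hρ : ‖ρ‖ = 1) (t : ℝ)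
    (ht : t < essSuppFn (essSupport Ω (fun x => σ x - 1)) ρ) :
    Tendsto (fun τ : ℝ =>
        ∫ x in Ω, (1 - σ x ^ (-(1 / (p - 1)))) * Real.exp (p * τ * (⟪x, ρ⟫ - t)))
      atTop atTop := by
  clear hub
  have hΩm : MeasurableSet Ω := hΩo.measurableSet
  have hΩvol : volume Ω < ⊤ := hΩb.measure_lt_top
  set q : ℝ := -(1 / (p - 1)) with hqdef
  have hq : q < 0 := by
    have h1 : (0:ℝ) < 1 / (p - 1) := by
      apply div_pos one_pos; linarith
    simp only [hqdef]; linarith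
  set D := essSupport Ω (fun x => σ x - 1) with hDdef
  obtain ⟨R, hR⟩ := hΩb.subset_closedBall 0
  set s : ℝ := (t + essSuppFn D ρ) / 2 with hsdef
  have hts : t < s := by simp only [hsdef]; linarith
  have hsh : s < essSuppFn D ρ := by simp only [hsdef]; linarith
  have hinnerc : Continuous fun x : EuclideanSpace ℝ (Fin n) => ⟪x, ρ⟫ :=
    continuous_id.inner continuous_const
  have hinnerm : Measurable fun x : EuclideanSpace ℝ (Fin n) => ⟪x, ρ⟫ := hinnerc.measurable
  set O : Set (EuclideanSpace ℝ (Fin n)) := Ω ∩ {x | s < ⟪x, ρ⟫} with hOdef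
  have hOopen : IsOpen O := hΩo.inter (isOpen_lt continuous_const hinnerc)
  have hDsub : D ⊆ Ω := diff_subset
  have hinner_le : ∀ x ∈ Ω, |⟪x, ρ⟫| ≤ R := by
    intro x hx
    calc |⟪x, ρ⟫| ≤ ‖x‖ * ‖ρ‖ := abs_real_inner_le_norm x ρ
    _ = ‖x‖ := by rw [hρ, mul_one]
    _ ≤ R := by simpa [mem_closedBall_zero_iff] using hR hx
  -- bounded below
  have hbdd : BddBelow {u : ℝ | volume (D \ halfSpace ρ u) = 0} := by
    refine ⟨-R - 1, fun u hu => ?_⟩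
    by_contra hlt
    push_neg at hlt
    have hDeq : D \ halfSpace ρ u = D := by
      ext x
      simp only [mem_diff, halfSpace, mem_setOf_eq, and_iff_left_iff_imp]
      intro hxD hle
      have habs := hinner_le x (hDsub hxD)
      have h1 : -R ≤ ⟪x, ρ⟫ := (abs_le.mp habs).1
      linarith
    have hu' : volume (D \ halfSpace ρ u) = 0 := hu
    rw [hDeq] at hu'
    exact absurd hu' hD.ne'
  -- positivity of the "active" part beyond the hyperplane
  have hEpos : 0 < volume {x ∈ O | σ x - 1 ≠ 0} := by
    rcases (zero_le : (0 : ENNReal) ≤ volume {x ∈ O | σ x - 1 ≠ 0}).eq_or_lt with h0 | h0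
    · exfalso
      have hOmem : O ∈ {O' : Set (EuclideanSpace ℝ (Fin n)) |
          IsOpen O' ∧ O' ⊆ Ω ∧ volume {x ∈ O' | (fun x => σ x - 1) x ≠ 0} = 0} :=
        ⟨hOopen, inter_subset_left, h0.symm⟩
      have hDO : Disjoint D O := by
        rw [Set.disjoint_left]
        intro x hxD hxO
        exact hxD.2 (mem_biUnion hOmem hxO)
      have hsub : D \ halfSpace ρ s ⊆ O := by
        intro x hx
        exact ⟨hDsub hx.1, show s < ⟪x, ρ⟫ from lt_of_not_ge hx.2⟩
      have hempty : D \ halfSpace ρ s = ∅ := by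
        ext x
        simp only [mem_empty_iff_false, iff_false]
        intro hx
        exact (Set.disjoint_left.mp hDO hx.1) (hsub hx)
      have hmem : s ∈ {u : ℝ | volume (D \ halfSpace ρ u) = 0} := by
        simp [hempty]
      have : essSuppFn D ρ ≤ s := csInf_le hbdd hmem
      linarith
    · exact h0
  -- remove the null set where σ < 1
  have hNmeas : MeasurableSet {x : EuclideanSpace ℝ (Fin n) | 1 ≤ σ x} :=
    measurableSet_le measurable_const hσm
  have hN0 : volume ({x : EuclideanSpace ℝ (Fin n) | ¬ 1 ≤ σ x} ∩ Ω) = 0 := by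
    have h := hge
    rw [MeasureTheory.ae_iff, Measure.restrict_apply' hΩm] at h
    exact h
  have hE2 : 0 < volume {x ∈ O | 1 < σ x} := by
    have hsub : {x ∈ O | σ x - 1 ≠ 0} ⊆
        {x ∈ O | 1 < σ x} ∪ ({x : EuclideanSpace ℝ (Fin n) | ¬ 1 ≤ σ x} ∩ Ω) := by
      rintro x ⟨hxO, hxne⟩
      by_cases h1 : 1 ≤ σ x
      · exact Or.inl ⟨hxO, h1.lt_of_ne (Ne.symm (sub_ne_zero.mp hxne))⟩
      · exact Or.inr ⟨h1, hxO.1⟩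
    have h2 : volume ({x ∈ O | 1 < σ x} ∪
        ({x : EuclideanSpace ℝ (Fin n) | ¬ 1 ≤ σ x} ∩ Ω)) ≤ volume {x ∈ O | 1 < σ x} := by
      refine le_trans (measure_union_le _ _) ?_
      rw [hN0, add_zero]
    exact lt_of_lt_of_le hEpos (le_trans (measure_mono hsub) h2)
  -- pick a set where σ is uniformly above 1
  set B : ℕ → Set (EuclideanSpace ℝ (Fin n)) :=
    fun k => O ∩ {x | 1 + 1 / (k + 1 : ℝ) ≤ σ x} with hBdef
  have hcover : {x ∈ O | 1 < σ x} ⊆ ⋃ k, B k := by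
    rintro x ⟨hxO, hx1⟩
    obtain ⟨k, hk⟩ := exists_nat_one_div_lt (sub_pos.mpr hx1)
    exact mem_iUnion.mpr ⟨k, hxO, by simp only [mem_setOf_eq]; linarith⟩
  obtain ⟨k, hk⟩ : ∃ k, 0 < volume (B k) := by
    by_contra hcon
    push_neg at hcon
    have hz : volume (⋃ k, B k) = 0 :=
      measure_iUnion_null fun k => le_zero_iff.mp (hcon k)
    exact absurd (le_trans (measure_mono hcover) hz.le) (not_le.mpr hE2)
  set ε : ℝ := 1 / (k + 1 : ℝ) with hεdef
  have hε : 0 < ε := by positivity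
  set c0 : ℝ := 1 - (1 + ε) ^ q with hc0def
  have hc0 : 0 < c0 := by
    have : (1 + ε) ^ q < 1 := Real.rpow_lt_one_of_one_lt_of_neg (by linarith) hq
    simp only [hc0def]; linarith
  have hBmeas : MeasurableSet (B k) :=
    (hΩm.inter (measurableSet_lt measurable_const hinnerm)).inter
      (measurableSet_le measurable_const hσm)
  have hBsub : B k ⊆ Ω := fun x hx => hx.1.1
  have hBfin : volume (B k) ≠ ⊤ :=
    (lt_of_le_of_lt (measure_mono hBsub) hΩvol).ne
  set v : ℝ := (volume (B k)).toReal with hvdef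
  have hv : 0 < v := ENNReal.toReal_pos hk.ne' hBfin
  -- a.e. strong measurability of the integrand
  have haem : ∀ τ : ℝ, AEStronglyMeasurable
      (fun x => (1 - σ x ^ q) * Real.exp (p * τ * (⟪x, ρ⟫ - t)))
      (volume.restrict Ω) := by
    intro τ
    have hmeas : Measurable fun x : EuclideanSpace ℝ (Fin n) =>
        (1 - Real.exp (Real.log (σ x) * q)) * Real.exp (p * τ * (⟪x, ρ⟫ - t)) := by
      exact (measurable_const.sub (Real.measurable_exp.comp
        ((Real.measurable_log.comp hσm).mul measurable_const))).mul
        (Real.measurable_exp.comp (measurable_const.mul (hinnerm.sub measurable_const)))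
    refine hmeas.aestronglyMeasurable.congr ?_
    filter_upwards [hge] with x hx1
    rw [Real.rpow_def_of_pos (by linarith)]
  -- integrability
  have hint : ∀ τ : ℝ, 0 ≤ τ →
      IntegrableOn (fun x => (1 - σ x ^ q) * Real.exp (p * τ * (⟪x, ρ⟫ - t))) Ω := by
    intro τ hτ
    have hpτ : 0 ≤ p * τ := mul_nonneg (by linarith) hτ
    refine Integrable.mono' (g := fun _ => Real.exp (p * τ * (R + |t|)))
      (integrableOn_const hΩvol.ne) (haem τ) ?_
    filter_upwards [hge, self_mem_ae_restrict hΩm] with x hx1 hxΩ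
    have h0σ : (0:ℝ) ≤ σ x := by linarith
    have hle1 : σ x ^ q ≤ 1 := Real.rpow_le_one_of_one_le_of_nonpos hx1 hq.le
    have hge0 : 0 ≤ σ x ^ q := Real.rpow_nonneg h0σ q
    have hf0 : (0:ℝ) ≤ 1 - σ x ^ q := by linarith
    have hf1 : 1 - σ x ^ q ≤ 1 := by linarith
    have hxin : ⟪x, ρ⟫ ≤ R := (abs_le.mp (hinner_le x hxΩ)).2
    rw [Real.norm_eq_abs, abs_mul, abs_of_nonneg hf0, abs_of_pos (Real.exp_pos _)]
    calc (1 - σ x ^ q) * Real.exp (p * τ * (⟪x, ρ⟫ - t))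
        ≤ 1 * Real.exp (p * τ * (R + |t|)) := by
          refine mul_le_mul hf1 (Real.exp_le_exp.mpr ?_) (Real.exp_pos _).le zero_le_one
          refine mul_le_mul_of_nonneg_left ?_ hpτ
          have := neg_abs_le t
          linarith
    _ = Real.exp (p * τ * (R + |t|)) := one_mul _
  -- a.e. nonnegativity
  have hpos : ∀ τ : ℝ, 0 ≤ᵐ[volume.restrict Ω]
      fun x => (1 - σ x ^ q) * Real.exp (p * τ * (⟪x, ρ⟫ - t)) := by
    intro τ
    filter_upwards [hge] with x hx1
    exact mul_nonneg (sub_nonneg.mpr (Real.rpow_le_one_of_one_le_of_nonpos hx1 hq.le))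
      (Real.exp_pos _).le
  -- key lower bound
  have key : ∀ τ : ℝ, 0 ≤ τ →
      c0 * Real.exp (p * τ * (s - t)) * v ≤
        ∫ x in Ω, (1 - σ x ^ q) * Real.exp (p * τ * (⟪x, ρ⟫ - t)) := by
    intro τ hτ
    have hpτ : 0 ≤ p * τ := mul_nonneg (by linarith) hτ
    have h1 : c0 * Real.exp (p * τ * (s - t)) * v ≤
        ∫ x in B k, (1 - σ x ^ q) * Real.exp (p * τ * (⟪x, ρ⟫ - t)) := by
      refine setIntegral_ge_of_const_le_real hBmeas hBfin ?_ ((hint τ hτ).mono_set hBsub)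
      rintro x ⟨⟨hxΩ, hxs⟩, hxσ⟩
      simp only [mem_setOf_eq] at hxs hxσ
      have hfc : c0 ≤ 1 - σ x ^ q := by
        have : σ x ^ q ≤ (1 + ε) ^ q :=
          Real.rpow_le_rpow_of_nonpos (by linarith) hxσ hq.le
        simp only [hc0def]; linarith
      have hexp : Real.exp (p * τ * (s - t)) ≤ Real.exp (p * τ * (⟪x, ρ⟫ - t)) := by
        refine Real.exp_le_exp.mpr (mul_le_mul_of_nonneg_left (by linarith) hpτ)
      exact mul_le_mul hfc hexp (Real.exp_pos _).le (by linarith)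
    have h2 : ∫ x in B k, (1 - σ x ^ q) * Real.exp (p * τ * (⟪x, ρ⟫ - t)) ≤
        ∫ x in Ω, (1 - σ x ^ q) * Real.exp (p * τ * (⟪x, ρ⟫ - t)) :=
      setIntegral_mono_set (hint τ hτ) (hpos τ) (HasSubset.Subset.eventuallyLE hBsub)
    linarith
  -- the lower bound blows up
  have hL : Tendsto (fun τ : ℝ => c0 * Real.exp (p * τ * (s - t)) * v) atTop atTop := by
    refine Tendsto.atTop_mul_const hv ?_
    refine Tendsto.const_mul_atTop hc0 ?_
    have hco : (0:ℝ) < p * (s - t) := mul_pos (by linarith) (by linarith)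
    have h1 : Tendsto (fun τ : ℝ => p * (s - t) * τ) atTop atTop :=
      Tendsto.const_mul_atTop hco tendsto_id
    have h2 := Real.tendsto_exp_atTop.comp h1
    refine h2.congr fun τ => ?_
    simp only [Function.comp]
    ring_nf
  refine tendsto_atTop_mono' atTop ?_ hL
  filter_upwards [eventually_ge_atTop 0] with τ hτ
  exact key τ hτ
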